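/- Let σ ∈ S_{m+1} be a permutation of full support whose unique left descent is s_m (the transposition (m, m+1)). Then σ = s_m s_{m-1} ⋯ s_2 s_1, i.e., σ is the descending Coxeter element. -/

import Mathlib

/-- The support of `w`: the set of simple reflection indices appearing in some
(equivalently, any) reduced word for `w`. -/
def CoxeterSystem.supp {B W : Type*} [Group W] {M : CoxeterMatrix B}
    (cs : CoxeterSystem M W) (w : W) : Set B :=
  { i | ∃ ω : List B, cs.IsReduced ω ∧ cs.wordProd ω = w ∧ i ∈ ω }


open Finset in
/-- inversion number of a permutation of `Fin n` -/
def pinv {n : ℕ} (σ : Equiv.Perm (Fin n)) : ℕ :=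
  (Finset.univ.filter (fun p : Fin n × Fin n => p.1 < p.2 ∧ σ p.2 < σ p.1)).card

lemma swap_adj_lt {m : ℕ} (i : Fin m) {x y : Fin (m + 1)} (h : x < y)
    (hne : ¬(x = i.castSucc ∧ y = i.succ)) :
    Equiv.swap i.castSucc i.succ x < Equiv.swap i.castSucc i.succ y := by
  simp only [Equiv.swap_apply_def]
  split_ifs <;>
    (simp only [Fin.lt_def, Fin.ext_iff, Fin.val_succ, Fin.coe_castSucc, not_and] at * <;> omega)

lemma pinv_swap_step {m : ℕ} (i : Fin m) (σ : Equiv.Perm (Fin (m + 1)))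
    (h : σ⁻¹ i.castSucc < σ⁻¹ i.succ) :
    pinv (Equiv.swap i.castSucc i.succ * σ) = pinv σ + 1 := by
  classical
  set t := Equiv.swap i.castSucc i.succ with ht
  set p := σ⁻¹ i.castSucc with hp
  set q := σ⁻¹ i.succ with hq
  have hσp : σ p = i.castSucc := by simp [hp]
  have hσq : σ q = i.succ := by simp [hq]
  have hset : (Finset.univ.filter
      (fun pr : Fin (m+1) × Fin (m+1) => pr.1 < pr.2 ∧ (t * σ) pr.2 < (t * σ) pr.1))
      = insert (p, q) (Finset.univ.filter
      (fun pr : Fin (m+1) × Fin (m+1) => pr.1 < pr.2 ∧ σ pr.2 < σ pr.1)) := by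
    ext ⟨a, b⟩
    rw [Finset.mem_insert, Finset.mem_filter, Finset.mem_filter]
    simp only [Finset.mem_filter, Finset.mem_univ, true_and, Finset.mem_insert,
      Prod.mk.injEq, Equiv.Perm.mul_apply]
    constructor
    · rintro ⟨hab, hlt⟩
      by_cases hpq : a = p ∧ b = q
      · exact Or.inl hpq
      · refine Or.inr ⟨hab, ?_⟩
        rcases lt_trichotomy (σ a) (σ b) with h1 | h1 | h1
        · exfalso
          have : t (σ a) < t (σ b) := by
            apply swap_adj_lt i h1
            rintro ⟨ha, hb⟩
            exact hpq ⟨by rw [← hσp] at ha; exact σ.injective ha,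
                       by rw [← hσq] at hb; exact σ.injective hb⟩
          exact absurd hlt (not_lt.2 this.le)
        · exact absurd (σ.injective h1) hab.ne
        · exact h1
    · rintro (⟨ha, hb⟩ | ⟨hab, hlt⟩)
      · subst ha; subst hb
        refine ⟨h, ?_⟩
        rw [hσp, hσq, ht, Equiv.swap_apply_left, Equiv.swap_apply_right]
        exact Fin.castSucc_lt_succ (i := i)
      · refine ⟨hab, ?_⟩
        apply swap_adj_lt i hlt
        rintro ⟨hb, ha⟩
        have hbp : b = p := σ.injective (by rw [hσp, hb])
        have haq : a = q := σ.injective (by rw [hσq, ha])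
        rw [hbp, haq] at hab
        exact absurd h (not_lt.2 hab.le)
  have hnotmem : (p, q) ∉ (Finset.univ.filter
      (fun pr : Fin (m+1) × Fin (m+1) => pr.1 < pr.2 ∧ σ pr.2 < σ pr.1)) := by
    simp only [Finset.mem_filter, Finset.mem_univ, true_and, not_and]
    intro _
    rw [hσp, hσq]
    exact not_lt.2 (Fin.castSucc_lt_succ (i := i)).le
  rw [pinv, hset, Finset.card_insert_of_notMem hnotmem, pinv]

lemma pinv_swap_step' {m : ℕ} (i : Fin m) (σ : Equiv.Perm (Fin (m + 1)))
    (h : σ⁻¹ i.succ < σ⁻¹ i.castSucc) :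
    pinv (Equiv.swap i.castSucc i.succ * σ) + 1 = pinv σ := by
  have h2 : (Equiv.swap i.castSucc i.succ * σ)⁻¹ i.castSucc
      < (Equiv.swap i.castSucc i.succ * σ)⁻¹ i.succ := by
    simp only [mul_inv_rev, Equiv.Perm.mul_apply, Equiv.symm_swap]
    rw [show (Equiv.swap i.castSucc i.succ)⁻¹ = Equiv.swap i.castSucc i.succ from rfl]
    rwa [Equiv.swap_apply_left, Equiv.swap_apply_right]
  have := pinv_swap_step i (Equiv.swap i.castSucc i.succ * σ) h2
  rw [← mul_assoc, Equiv.swap_mul_self, one_mul] at this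
  omega

lemma perm_strictMono_eq_one {n : ℕ} (σ : Equiv.Perm (Fin n)) (h : StrictMono σ) :
    σ = 1 := by
  cases n with
  | zero => ext x; exact x.elim0
  | succ n =>
  have hinv : StrictMono ⇑σ⁻¹ := by
    intro a b hab
    rcases lt_trichotomy (σ⁻¹ a) (σ⁻¹ b) with h1 | h1 | h1
    · exact h1
    · exact absurd (congrArg σ h1) (by simp [hab.ne])
    · have := h h1
      simp only [Equiv.Perm.coe_inv, Equiv.apply_symm_apply] at this
      exact absurd hab (not_lt.2 this.le)
  have le_apply : ∀ (f : Equiv.Perm (Fin (n+1))), StrictMono f → ∀ x : Fin (n+1), x ≤ f x := by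
    intro f hf x
    induction x using Fin.induction with
    | zero => exact Fin.zero_le _
    | succ y ih =>
      have h1 : f y.castSucc < f y.succ := hf (Fin.castSucc_lt_succ (i := y))
      have h2 : y.castSucc ≤ f y.castSucc := ih
      have : y.castSucc < f y.succ := lt_of_le_of_lt h2 h1
      rwa [Fin.castSucc_lt_iff_succ_le] at this
  ext x
  have h1 : x ≤ σ x := le_apply σ h x
  have h2 : σ x ≤ σ⁻¹ (σ x) := le_apply _ hinv (σ x)
  simp only [Equiv.Perm.coe_inv, Equiv.symm_apply_apply] at h2
  simp [le_antisymm h2 h1]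

lemma pinv_eq_zero_eq_one {n : ℕ} (σ : Equiv.Perm (Fin n)) (h : pinv σ = 0) : σ = 1 := by
  apply perm_strictMono_eq_one
  intro a b hab
  rcases lt_trichotomy (σ a) (σ b) with h1 | h1 | h1
  · exact h1
  · exact absurd (σ.injective h1) hab.ne
  · exfalso
    have : (a, b) ∈ Finset.univ.filter
        (fun p : Fin n × Fin n => p.1 < p.2 ∧ σ p.2 < σ p.1) := by
      simp [hab, h1]
    rw [pinv, Finset.card_eq_zero] at h
    simp [h] at this

section
variable {m : ℕ} (cs : CoxeterSystem (CoxeterMatrix.Aₙ m) (Equiv.Perm (Fin (m + 1))))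
  (hs : ∀ i : Fin m, cs.simple i = Equiv.swap i.castSucc i.succ)

include hs

lemma pinv_wordProd_le (ω : List (Fin m)) : pinv (cs.wordProd ω) ≤ ω.length := by
  induction ω with
  | nil =>
    simp only [cs.wordProd_nil, pinv, List.length_nil, Nat.le_zero, Finset.card_eq_zero]
    rw [Finset.filter_eq_empty_iff]
    rintro ⟨a, b⟩ -
    rintro ⟨h1, h2⟩
    exact absurd h1 (not_lt.2 h2.le)
  | cons i ω ih =>
    rw [cs.wordProd_cons, hs i]
    set σ := cs.wordProd ω
    rcases lt_trichotomy (σ⁻¹ i.castSucc) (σ⁻¹ i.succ) with h1 | h1 | h1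
    · rw [pinv_swap_step i σ h1]
      simpa using ih
    · exact absurd (congrArg σ h1) (by
        simp [(Fin.castSucc_lt_succ (i := i)).ne])
    · have := pinv_swap_step' i σ h1
      simp only [List.length_cons]
      omega

lemma length_le_pinv (σ : Equiv.Perm (Fin (m + 1))) : cs.length σ ≤ pinv σ := by
  generalize hn : pinv σ = n
  induction n using Nat.strong_induction_on generalizing σ with
  | _ n ih =>
    rcases Nat.eq_zero_or_pos n with h0 | h0
    · subst h0
      rw [pinv_eq_zero_eq_one σ hn, cs.length_one]
    · have hne : σ ≠ 1 := by
        rintro rfl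
        rw [show pinv (1 : Equiv.Perm (Fin (m+1))) = 0 by
          apply Nat.le_antisymm _ (Nat.zero_le _)
          simpa using pinv_wordProd_le cs hs []] at hn
        omega
      have hex : ∃ i : Fin m, σ⁻¹ i.succ < σ⁻¹ i.castSucc := by
        by_contra hcon
        push_neg at hcon
        have hmono : StrictMono ⇑σ⁻¹ := by
          rw [Fin.strictMono_iff_lt_succ]
          intro i
          rcases lt_trichotomy (σ⁻¹ i.castSucc) (σ⁻¹ i.succ) with h1 | h1 | h1
          · exact h1
          · exact absurd (congrArg σ h1) (by simp [(Fin.castSucc_lt_succ (i := i)).ne])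
          · exact absurd h1 (not_lt.2 (hcon i))
        have : σ⁻¹ = 1 := perm_strictMono_eq_one _ hmono
        exact hne (by simpa using congrArg (·⁻¹) this)
      obtain ⟨i, hi⟩ := hex
      have hstep := pinv_swap_step' i σ hi
      have hlt : pinv (Equiv.swap i.castSucc i.succ * σ) < n := by omega
      have hrec := ih _ hlt (Equiv.swap i.castSucc i.succ * σ) rfl
      have : cs.length σ ≤ 1 + cs.length (Equiv.swap i.castSucc i.succ * σ) := by
        have h2 : σ = cs.simple i * (Equiv.swap i.castSucc i.succ * σ) := by
          rw [hs i, ← mul_assoc, Equiv.swap_mul_self, one_mul]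
        calc cs.length σ = cs.length (cs.simple i * (Equiv.swap i.castSucc i.succ * σ)) := by
              rw [← h2]
          _ ≤ cs.length (cs.simple i) + cs.length (Equiv.swap i.castSucc i.succ * σ) :=
              cs.length_mul_le _ _
          _ = 1 + cs.length (Equiv.swap i.castSucc i.succ * σ) := by rw [cs.length_simple]
      omega

lemma length_eq_pinv (σ : Equiv.Perm (Fin (m + 1))) : cs.length σ = pinv σ := by
  refine le_antisymm (length_le_pinv cs hs σ) ?_
  obtain ⟨ω, hω, hπ⟩ := cs.exists_reduced_word σ
  calc pinv σ = pinv (cs.wordProd ω) := by rw [← hπ]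
    _ ≤ ω.length := pinv_wordProd_le cs hs ω
    _ = cs.length σ := by rw [hπ]; exact hω.symm

lemma isLeftDescent_iff_inv (σ : Equiv.Perm (Fin (m + 1))) (i : Fin m) :
    cs.IsLeftDescent σ i ↔ σ⁻¹ i.succ < σ⁻¹ i.castSucc := by
  unfold CoxeterSystem.IsLeftDescent
  rw [length_eq_pinv cs hs, length_eq_pinv cs hs, hs i]
  rcases lt_trichotomy (σ⁻¹ i.castSucc) (σ⁻¹ i.succ) with h1 | h1 | h1
  · rw [pinv_swap_step i σ h1]
    simp only [iff_false, not_lt.2 h1.le]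
    omega
  · exact absurd (congrArg σ h1) (by simp [(Fin.castSucc_lt_succ (i := i)).ne])
  · have := pinv_swap_step' i σ h1
    simp only [h1, iff_true]
    omega

end

section
variable {m : ℕ} (cs : CoxeterSystem (CoxeterMatrix.Aₙ m) (Equiv.Perm (Fin (m + 1))))
  (hs : ∀ i : Fin m, cs.simple i = Equiv.swap i.castSucc i.succ)

include hs

lemma wordProd_zero_ne (ω : List (Fin m)) (hred : cs.IsReduced ω)
    (h0 : ∃ i ∈ ω, i.val = 0) : cs.wordProd ω 0 ≠ 0 := by
  induction ω with
  | nil => simp at h0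
  | cons i ω ih =>
    have hred' : cs.IsReduced ω := by
      have := CoxeterSystem.IsReduced.drop hred 1
      simpa using this
    have hnd : ¬ cs.IsLeftDescent (cs.wordProd ω) i := by
      unfold CoxeterSystem.IsLeftDescent
      rw [← cs.wordProd_cons]
      rw [hred, hred']
      simp
    rw [isLeftDescent_iff_inv cs hs] at hnd
    set σ' := cs.wordProd ω with hσ'
    have hlt : σ'⁻¹ i.castSucc < σ'⁻¹ i.succ := by
      rcases lt_trichotomy (σ'⁻¹ i.castSucc) (σ'⁻¹ i.succ) with h1 | h1 | h1
      · exact h1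
      · exact absurd (congrArg σ' h1) (by simp [(Fin.castSucc_lt_succ (i := i)).ne])
      · exact absurd h1 hnd
    rw [cs.wordProd_cons, hs i]
    by_cases hi0 : i.val = 0
    · have hcast : i.castSucc = (0 : Fin (m + 1)) := by
        ext; simpa using hi0
      intro hcon
      simp only [Equiv.Perm.mul_apply] at hcon
      have : σ' 0 = i.succ := by
        have := congrArg (Equiv.swap i.castSucc i.succ) hcon
        rw [Equiv.swap_apply_self] at this
        rw [this, ← hcast, Equiv.swap_apply_left]
      have h2 : σ'⁻¹ i.succ = 0 := by rw [← this, Equiv.Perm.coe_inv, Equiv.symm_apply_apply]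
      rw [h2] at hlt
      exact absurd hlt (Fin.not_lt_zero _)
    · have hmem : ∃ j ∈ ω, j.val = 0 := by
        obtain ⟨j, hj, hjv⟩ := h0
        rcases List.mem_cons.1 hj with rfl | hj'
        · exact absurd hjv hi0
        · exact ⟨j, hj', hjv⟩
      have hne := ih hred' hmem
      intro hcon
      simp only [Equiv.Perm.mul_apply] at hcon
      apply hne
      have hc1 : i.castSucc ≠ (0 : Fin (m + 1)) := by
        simp [Fin.ext_iff, hi0]
      have hc2 : i.succ ≠ (0 : Fin (m + 1)) := by
        simp [Fin.ext_iff]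
      have := congrArg (Equiv.swap i.castSucc i.succ) hcon
      rw [Equiv.swap_apply_self, Equiv.swap_apply_of_ne_of_ne (Ne.symm hc1) (Ne.symm hc2)] at this
      exact this

lemma wordProd_take_eval : ∀ (k : ℕ), k ≤ m → ∀ (x : Fin (m + 1)),
    ((cs.wordProd ((List.finRange m).take k)) x).val =
      if x.val < k then x.val + 1 else if x.val = k then 0 else x.val := by
  intro k
  induction k with
  | zero =>
    intro _ x
    simp only [List.take_zero, cs.wordProd_nil, Equiv.Perm.one_apply]
    split_ifs <;> omega
  | succ k ih =>
    intro hk x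
    have hkm : k < m := by omega
    have htake : (List.finRange m).take (k + 1)
        = (List.finRange m).take k ++ [(⟨k, hkm⟩ : Fin m)] := by
      rw [List.take_succ]
      congr 1
      rw [List.getElem?_eq_getElem (by simpa using hkm)]
      simp [Fin.ext_iff]
    rw [htake, cs.wordProd_append, cs.wordProd_singleton, hs]
    simp only [Equiv.Perm.mul_apply]
    have hcs : (⟨k, hkm⟩ : Fin m).castSucc = (⟨k, by omega⟩ : Fin (m + 1)) := rfl
    have hsc : (⟨k, hkm⟩ : Fin m).succ = (⟨k + 1, by omega⟩ : Fin (m + 1)) := rfl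
    by_cases h1 : x.val = k
    · have hx : x = (⟨k, hkm⟩ : Fin m).castSucc := by rw [hcs]; exact Fin.ext h1
      rw [hx, Equiv.swap_apply_left, hsc, ih (by omega) _]
      simp only
      split_ifs <;> omega
    · by_cases h2 : x.val = k + 1
      · have hx : x = (⟨k, hkm⟩ : Fin m).succ := by rw [hsc]; exact Fin.ext h2
        rw [hx, Equiv.swap_apply_right, hcs, ih (by omega) _]
        simp only
        split_ifs <;> omega
      · have hx : Equiv.swap (⟨k, hkm⟩ : Fin m).castSucc (⟨k, hkm⟩ : Fin m).succ x = x := by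
          apply Equiv.swap_apply_of_ne_of_ne
          · rw [hcs]; simp [Fin.ext_iff]; omega
          · rw [hsc]; simp [Fin.ext_iff]; omega
        rw [hx, ih (by omega) x]
        split_ifs <;> omega

end

theorem stmt_1 {m : ℕ} (hm : 1 ≤ m)
    (cs : CoxeterSystem (CoxeterMatrix.Aₙ m) (Equiv.Perm (Fin (m + 1))))
    (hs : ∀ i : Fin m, cs.simple i = Equiv.swap i.castSucc i.succ)
    (σ : Equiv.Perm (Fin (m + 1)))
    (hfull : cs.supp σ = Set.univ)
    (hdesc : cs.IsLeftDescent σ ⟨m - 1, by omega⟩)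
    (huniq : ∀ i : Fin m, cs.IsLeftDescent σ i → i = ⟨m - 1, by omega⟩) :
    σ = cs.wordProd ((List.finRange m).reverse) := by
  -- σ does not fix 0
  have hσ0 : σ 0 ≠ 0 := by
    have hmem : (⟨0, by omega⟩ : Fin m) ∈ cs.supp σ := by
      rw [hfull]; trivial
    obtain ⟨ω, hred, hπ, hmemω⟩ := hmem
    rw [← hπ]
    exact wordProd_zero_ne cs hs ω hred ⟨_, hmemω, rfl⟩
  have hinv0 : 1 ≤ (σ⁻¹ (0 : Fin (m + 1))).val := by
    rcases Nat.eq_zero_or_pos (σ⁻¹ (0 : Fin (m + 1))).val with h | h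
    · exfalso
      apply hσ0
      have h2 : σ⁻¹ (0 : Fin (m + 1)) = 0 := Fin.ext h
      calc σ 0 = σ (σ⁻¹ 0) := by rw [h2]
        _ = 0 := Equiv.apply_symm_apply σ 0
    · exact h
  -- monotonicity from uniqueness of descents
  have mono : ∀ k (hk : k + 1 < m),
      σ⁻¹ (⟨k, by omega⟩ : Fin (m + 1)) < σ⁻¹ (⟨k + 1, by omega⟩ : Fin (m + 1)) := by
    intro k hk
    set i : Fin m := ⟨k, by omega⟩ with hi
    have hne : i ≠ ⟨m - 1, by omega⟩ := by
      simp only [hi, ne_eq, Fin.mk.injEq]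
      omega
    have hnd : ¬ cs.IsLeftDescent σ i := fun hd => hne (huniq i hd)
    rw [isLeftDescent_iff_inv cs hs] at hnd
    have hcs : i.castSucc = (⟨k, by omega⟩ : Fin (m + 1)) := rfl
    have hsc : i.succ = (⟨k + 1, by omega⟩ : Fin (m + 1)) := rfl
    rw [← hcs, ← hsc]
    rcases lt_trichotomy (σ⁻¹ i.castSucc) (σ⁻¹ i.succ) with h1 | h1 | h1
    · exact h1
    · exact absurd (congrArg σ h1) (by simp [(Fin.castSucc_lt_succ (i := i)).ne])
    · exact absurd h1 hnd
  have lower : ∀ k, ∀ h : k < m, k + 1 ≤ (σ⁻¹ (⟨k, by omega⟩ : Fin (m + 1))).val := by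
    intro k
    induction k with
    | zero =>
      intro _
      exact hinv0
    | succ k ih =>
      intro h
      have h1 := mono k h
      rw [Fin.lt_def] at h1
      have h2 := ih (by omega)
      omega
  have upper : ∀ d k (hk : k < m) (hd : m - 1 - k = d),
      (σ⁻¹ (⟨k, by omega⟩ : Fin (m + 1))).val ≤ k + 1 := by
    intro d
    induction d with
    | zero =>
      intro k hk hd
      have hk' : k = m - 1 := by omega
      have := Fin.is_le (σ⁻¹ (⟨k, by omega⟩ : Fin (m + 1)))
      omega
    | succ d ih =>
      intro k hk hd
      have hk1 : k + 1 < m := by omega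
      have h1 := mono k hk1
      rw [Fin.lt_def] at h1
      have h2 := ih (k + 1) (by omega) (by omega)
      omega
  have key : ∀ k, ∀ h : k < m, (σ⁻¹ (⟨k, by omega⟩ : Fin (m + 1))).val = k + 1 := by
    intro k h
    have := lower k h
    have := upper (m - 1 - k) k h rfl
    omega
  have hlast : (σ⁻¹ (⟨m, by omega⟩ : Fin (m + 1))).val = 0 := by
    by_contra hv
    set v := (σ⁻¹ (⟨m, by omega⟩ : Fin (m + 1))).val with hvdef
    have hvle : v ≤ m := Fin.is_le _
    have hv1 : v - 1 < m := by omega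
    have h1 := key (v - 1) hv1
    have h2 : σ⁻¹ (⟨v - 1, by omega⟩ : Fin (m + 1)) = σ⁻¹ (⟨m, by omega⟩ : Fin (m + 1)) :=
      Fin.ext (by omega)
    have h3 := σ⁻¹.injective h2
    rw [Fin.ext_iff] at h3
    simp only at h3
    omega
  have htakefull : (List.finRange m).take m = List.finRange m :=
    List.take_of_length_le (le_of_eq (List.length_finRange (n := m)))
  have heval := wordProd_take_eval cs hs m le_rfl
  rw [htakefull] at heval
  have heq : σ⁻¹ = cs.wordProd (List.finRange m) := by
    apply Equiv.ext
    intro x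
    apply Fin.val_injective
    rw [heval x]
    rcases Nat.lt_or_ge x.val m with hx | hx
    · have hk := key x.val hx
      have hxeq : (⟨x.val, by omega⟩ : Fin (m + 1)) = x := Fin.ext rfl
      rw [hxeq] at hk
      rw [hk]
      simp [hx]
    · have hxm : x.val = m := by omega
      have hxeq : (⟨m, by omega⟩ : Fin (m + 1)) = x := Fin.ext hxm.symm
      rw [hxeq] at hlast
      rw [hlast]
      simp [hxm]
  calc σ = (σ⁻¹)⁻¹ := by rw [inv_inv]
    _ = (cs.wordProd (List.finRange m))⁻¹ := by rw [heq]
    _ = cs.wordProd ((List.finRange m).reverse) := (cs.wordProd_reverse _).symm
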